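/- Let n ≥ 2 and S be an admissible peak set such that 2 ∉ S or n−1 ∉ S. Then the maximum ℓ∞ distance between permutations in P(S;n) is n−1. -/
import Mathlib


/-- Hamming distance on permutations of `Fin n`. -/
def dH (n : ℕ) (σ ρ : Equiv.Perm (Fin n)) : ℕ :=
  (Finset.univ.filter (fun i => σ i ≠ ρ i)).card

/-- ℓ∞ distance on permutations of `Fin n`. -/
def dL (n : ℕ) (σ ρ : Equiv.Perm (Fin n)) : ℕ :=
  Finset.univ.sup (fun i => (((σ i : ℕ) : ℤ) - ((ρ i : ℕ) : ℤ)).natAbs)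

/-- Kendall-Tau distance: number of deranged pairs. -/
def dK (n : ℕ) (σ ρ : Equiv.Perm (Fin n)) : ℕ :=
  (Finset.univ.filter (fun p : Fin n × Fin n =>
    p.1 < p.2 ∧ (((σ p.1 : ℕ) : ℤ) - ((σ p.2 : ℕ) : ℤ)) *
      (((ρ p.1 : ℕ) : ℤ) - ((ρ p.2 : ℕ) : ℤ)) < 0)).card

/-- `τ` is an adjacent transposition `(i, i+1)`. -/
def IsAdjTrans (n : ℕ) (τ : Equiv.Perm (Fin n)) : Prop :=
  ∃ (i : ℕ) (h : i + 1 < n), τ = Equiv.swap ⟨i, Nat.lt_of_succ_lt h⟩ ⟨i + 1, h⟩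

/-- Minimal number of adjacent transpositions transforming `σ` into `ρ`
(acting by left multiplication). -/
noncomputable def dK' (n : ℕ) (σ ρ : Equiv.Perm (Fin n)) : ℕ :=
  sInf {m | ∃ L : List (Equiv.Perm (Fin n)), L.length = m ∧
    (∀ τ ∈ L, IsAdjTrans n τ) ∧ L.prod * σ = ρ}

/-- The peak set of `σ`, with 1-based positions: `j ∈ {2, …, n-1}` is a peak if
`σ_{j-1} < σ_j > σ_{j+1}` in one-line notation (so 0-based indices `j-2, j-1, j`). -/
def peaks (n : ℕ) (σ : Equiv.Perm (Fin n)) : Finset ℕ :=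
  (Finset.Icc 2 (n - 1)).filter (fun j =>
    ∃ (h1 : j - 2 < n) (h2 : j - 1 < n) (h3 : j < n),
      σ ⟨j - 2, h1⟩ < σ ⟨j - 1, h2⟩ ∧ σ ⟨j, h3⟩ < σ ⟨j - 1, h2⟩)

namespace PeakAux

/-- `e[S]`: identity with values swapped at positions `j-1, j` (0-based) for each `j ∈ S`. -/
def fS (n : ℕ) (S : Finset ℕ) (hsub : ∀ j ∈ S, 2 ≤ j ∧ j ≤ n - 1) (hn : 2 ≤ n) :
    Fin n → Fin n := fun i =>
  if h1 : (i : ℕ) + 1 ∈ S then ⟨(i : ℕ) + 1, by have := hsub _ h1; omega⟩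
  else if (i : ℕ) ∈ S then ⟨(i : ℕ) - 1, by have := i.isLt; omega⟩
  else i

lemma fS_val (n : ℕ) (S : Finset ℕ) (hsub) (hn) (i : Fin n) :
    (fS n S hsub hn i : ℕ) =
      if (i : ℕ) + 1 ∈ S then (i : ℕ) + 1
      else if (i : ℕ) ∈ S then (i : ℕ) - 1 else (i : ℕ) := by
  unfold fS; split_ifs <;> rfl

lemma fS_invol (n : ℕ) (S : Finset ℕ) (hsub) (hadj : ∀ j ∈ S, j + 1 ∉ S) (hn) :
    Function.Involutive (fS n S hsub hn) := by
  intro i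
  apply Fin.ext
  by_cases h1 : (i : ℕ) + 1 ∈ S
  · have ha : (fS n S hsub hn i : ℕ) = (i : ℕ) + 1 := by rw [fS_val]; simp [h1]
    rw [fS_val, ha]
    have h2 := hadj _ h1
    simp [h1, h2]
  · by_cases h2 : (i : ℕ) ∈ S
    · have hge := hsub _ h2
      have ha : (fS n S hsub hn i : ℕ) = (i : ℕ) - 1 := by rw [fS_val]; simp [h1, h2]
      rw [fS_val, ha]
      have e1 : (i : ℕ) - 1 + 1 = (i : ℕ) := by omega
      rw [e1]
      simp [h2]
    · have ha : (fS n S hsub hn i : ℕ) = (i : ℕ) := by rw [fS_val]; simp [h1, h2]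
      rw [fS_val, ha]
      simp [h1, h2]


noncomputable def eS (n : ℕ) (S : Finset ℕ) (hsub : ∀ j ∈ S, 2 ≤ j ∧ j ≤ n - 1) (hadj : ∀ j ∈ S, j + 1 ∉ S) (hn : 2 ≤ n) : Equiv.Perm (Fin n) :=
  (fS_invol n S hsub hadj hn).toPerm

lemma eS_val (n : ℕ) (S : Finset ℕ) (hsub : ∀ j ∈ S, 2 ≤ j ∧ j ≤ n - 1) (hadj : ∀ j ∈ S, j + 1 ∉ S) (hn : 2 ≤ n) (i : Fin n) :
    (eS n S hsub hadj hn i : ℕ) =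
      if (i : ℕ) + 1 ∈ S then (i : ℕ) + 1
      else if (i : ℕ) ∈ S then (i : ℕ) - 1 else (i : ℕ) :=
  fS_val n S hsub hn i

lemma peaks_eS (n : ℕ) (S : Finset ℕ) (hsub : ∀ j ∈ S, 2 ≤ j ∧ j ≤ n - 1)
    (hadj : ∀ j ∈ S, j + 1 ∉ S) (hn : 2 ≤ n) :
    peaks n (eS n S hsub hadj hn) = S := by
  ext j
  simp only [peaks, Finset.mem_filter, Finset.mem_Icc]
  constructor
  · rintro ⟨⟨hj2, hjn⟩, h1, h2, h3, hlt1, hlt2⟩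
    by_contra hjS
    rw [Fin.lt_def] at hlt1 hlt2
    rw [eS_val, eS_val] at hlt1
    rw [eS_val, eS_val] at hlt2
    simp only [Fin.val_mk] at hlt1 hlt2
    have e1 : j - 2 + 1 = j - 1 := by omega
    have e2 : j - 1 + 1 = j := by omega
    rw [e1] at hlt1
    rw [e2] at hlt1 hlt2
    split_ifs at hlt1 hlt2 <;>
      first
        | omega
        | exact absurd (by assumption : j ∈ S) hjS
  · intro hjS
    have hb := hsub _ hjS
    have hm1 : j - 1 ∉ S := by
      intro hc
      have hx := hadj _ hc
      have e : j - 1 + 1 = j := by omega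
      rw [e] at hx
      exact hx hjS
    have hp1 : j + 1 ∉ S := hadj _ hjS
    have e1 : j - 2 + 1 = j - 1 := by omega
    have e2 : j - 1 + 1 = j := by omega
    refine ⟨⟨hb.1, hb.2⟩, by omega, by omega, by omega, ?_, ?_⟩
    · rw [Fin.lt_def, eS_val, eS_val]
      simp only [Fin.val_mk]
      rw [e1, e2, if_neg hm1, if_pos hjS]
      split_ifs with hc
      · have := hsub _ hc; omega
      · omega
    · rw [Fin.lt_def, eS_val, eS_val]
      simp only [Fin.val_mk]
      rw [e2, if_pos hjS, if_neg hp1, if_pos hjS]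
      omega

/-- Positions permutation for `e*[S]`: swap positions `j-2, j-1` (0-based) for `j ∈ S`. -/
def gS (n : ℕ) (S : Finset ℕ) (hsub : ∀ j ∈ S, 2 ≤ j ∧ j ≤ n - 1) (hn : 2 ≤ n) :
    Fin n → Fin n := fun i =>
  if h1 : (i : ℕ) + 2 ∈ S then ⟨(i : ℕ) + 1, by have := hsub _ h1; omega⟩
  else if (i : ℕ) + 1 ∈ S then ⟨(i : ℕ) - 1, by have := i.isLt; omega⟩
  else i

lemma gS_val (n : ℕ) (S : Finset ℕ) (hsub) (hn) (i : Fin n) :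
    (gS n S hsub hn i : ℕ) =
      if (i : ℕ) + 2 ∈ S then (i : ℕ) + 1
      else if (i : ℕ) + 1 ∈ S then (i : ℕ) - 1 else (i : ℕ) := by
  unfold gS; split_ifs <;> rfl

lemma gS_invol (n : ℕ) (S : Finset ℕ) (hsub) (hadj : ∀ j ∈ S, j + 1 ∉ S) (hn) :
    Function.Involutive (gS n S hsub hn) := by
  intro i
  apply Fin.ext
  by_cases h1 : (i : ℕ) + 2 ∈ S
  · have ha : (gS n S hsub hn i : ℕ) = (i : ℕ) + 1 := by rw [gS_val]; simp [h1]
    rw [gS_val, ha]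
    have h2 := hadj _ h1
    have e : (i : ℕ) + 2 + 1 = (i : ℕ) + 1 + 2 := by omega
    rw [e] at h2
    simp [h1, h2]
  · by_cases h2 : (i : ℕ) + 1 ∈ S
    · have hge := hsub _ h2
      have ha : (gS n S hsub hn i : ℕ) = (i : ℕ) - 1 := by rw [gS_val]; simp [h1, h2]
      rw [gS_val, ha]
      have e1 : (i : ℕ) - 1 + 2 = (i : ℕ) + 1 := by omega
      rw [e1]
      simp [h2]
      omega
    · have ha : (gS n S hsub hn i : ℕ) = (i : ℕ) := by rw [gS_val]; simp [h1, h2]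
      rw [gS_val, ha]
      simp [h1, h2]

noncomputable def estar (n : ℕ) (S : Finset ℕ) (hsub : ∀ j ∈ S, 2 ≤ j ∧ j ≤ n - 1)
    (hadj : ∀ j ∈ S, j + 1 ∉ S) (hn : 2 ≤ n) : Equiv.Perm (Fin n) :=
  ((gS_invol n S hsub hadj hn).toPerm).trans Fin.revPerm

lemma estar_val (n : ℕ) (S : Finset ℕ) (hsub : ∀ j ∈ S, 2 ≤ j ∧ j ≤ n - 1)
    (hadj : ∀ j ∈ S, j + 1 ∉ S) (hn : 2 ≤ n) (i : Fin n) :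
    (estar n S hsub hadj hn i : ℕ) =
      if (i : ℕ) + 2 ∈ S then n - 2 - (i : ℕ)
      else if (i : ℕ) + 1 ∈ S then n - (i : ℕ) else n - 1 - (i : ℕ) := by
  have : (estar n S hsub hadj hn i : ℕ) = n - 1 - (gS n S hsub hn i : ℕ) := by
    show ((Fin.rev (gS n S hsub hn i) : Fin n) : ℕ) = _
    rw [Fin.val_rev]
    omega
  rw [this, gS_val]
  have hlt := i.isLt
  split_ifs with h1 h2
  · have := hsub _ h1; omega
  · have := hsub _ h2; omega
  · omega

lemma peaks_estar (n : ℕ) (S : Finset ℕ) (hsub : ∀ j ∈ S, 2 ≤ j ∧ j ≤ n - 1)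
    (hadj : ∀ j ∈ S, j + 1 ∉ S) (hn : 2 ≤ n) :
    peaks n (estar n S hsub hadj hn) = S := by
  ext j
  simp only [peaks, Finset.mem_filter, Finset.mem_Icc]
  constructor
  · rintro ⟨⟨hj2, hjn⟩, h1, h2, h3, hlt1, hlt2⟩
    by_contra hjS
    rw [Fin.lt_def] at hlt1 hlt2
    rw [estar_val, estar_val] at hlt1
    rw [estar_val, estar_val] at hlt2
    simp only [Fin.val_mk] at hlt1 hlt2
    have e1 : j - 2 + 2 = j := by omega
    have e2 : j - 2 + 1 = j - 1 := by omega
    have e3 : j - 1 + 2 = j + 1 := by omega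
    have e4 : j - 1 + 1 = j := by omega
    rw [e1, e2] at hlt1
    rw [e3, e4] at hlt1 hlt2
    by_cases hD : j + 1 ∈ S
    · have hD2 : j + 2 ∉ S := by
        have h' := hadj _ hD
        have e : j + 1 + 1 = j + 2 := by omega
        rw [e] at h'
        exact h'
      split_ifs at hlt1 hlt2 <;>
        first
          | omega
          | exact absurd (by assumption : j ∈ S) hjS
          | exact absurd (by assumption : j + 2 ∈ S) hD2
          | exact absurd hD (by assumption)
    · split_ifs at hlt1 <;>
        first
          | omega
          | exact absurd (by assumption : j ∈ S) hjS
          | exact absurd (by assumption : j + 1 ∈ S) hD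
  · intro hjS
    have hb := hsub _ hjS
    have hm1 : j - 1 ∉ S := by
      intro hc
      have hx := hadj _ hc
      have e : j - 1 + 1 = j := by omega
      rw [e] at hx
      exact hx hjS
    have hp1 : j + 1 ∉ S := hadj _ hjS
    have e1 : j - 2 + 2 = j := by omega
    have e2 : j - 2 + 1 = j - 1 := by omega
    have e3 : j - 1 + 2 = j + 1 := by omega
    have e4 : j - 1 + 1 = j := by omega
    refine ⟨⟨hb.1, hb.2⟩, by omega, by omega, by omega, ?_, ?_⟩
    · rw [Fin.lt_def, estar_val, estar_val]
      simp only [Fin.val_mk]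
      rw [e1, e2, e3, e4]
      split_ifs <;>
        first
          | omega
          | exact absurd hjS (by assumption)
          | exact absurd (by assumption : j + 1 ∈ S) hp1
          | exact absurd (by assumption : j - 1 ∈ S) hm1
    · rw [Fin.lt_def, estar_val, estar_val]
      simp only [Fin.val_mk]
      rw [e3, e4]
      split_ifs <;>
        first
          | omega
          | exact absurd hjS (by assumption)
          | exact absurd (by assumption : j + 1 ∈ S) hp1

lemma dL_le (n : ℕ) (hn : 2 ≤ n) (σ ρ : Equiv.Perm (Fin n)) : dL n σ ρ ≤ n - 1 := by
  apply Finset.sup_le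
  intro i _
  have h1 := (σ i).isLt
  have h2 := (ρ i).isLt
  omega

end PeakAux


/-- if `2 ∉ S` or `n-1 ∉ S`, the maximum ℓ∞ distance on
`P(S;n)` is `n - 1`. -/
theorem max_linf_on_peak_class (n : ℕ) (hn : 2 ≤ n) (S : Finset ℕ)
    (hS : ∃ σ : Equiv.Perm (Fin n), peaks n σ = S)
    (h : 2 ∉ S ∨ n - 1 ∉ S) :
    IsGreatest {d | ∃ σ ρ : Equiv.Perm (Fin n),
        peaks n σ = S ∧ peaks n ρ = S ∧ d = dL n σ ρ} (n - 1) := by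
  obtain ⟨σ₀, hσ₀⟩ := hS
  have hsub : ∀ j ∈ S, 2 ≤ j ∧ j ≤ n - 1 := by
    intro j hj
    rw [← hσ₀] at hj
    simp only [peaks, Finset.mem_filter, Finset.mem_Icc] at hj
    exact hj.1
  have hadj : ∀ j ∈ S, j + 1 ∉ S := by
    intro j hj hj1
    have hb := hsub _ hj
    rw [← hσ₀] at hj hj1
    simp only [peaks, Finset.mem_filter, Finset.mem_Icc] at hj hj1
    obtain ⟨-, h1, h2, h3, -, hA⟩ := hj
    obtain ⟨-, h1', h2', h3', hB, -⟩ := hj1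
    have ea : (⟨j + 1 - 2, h1'⟩ : Fin n) = ⟨j - 1, h2⟩ := by
      apply Fin.ext; simp only [Fin.val_mk]; omega
    have eb : (⟨j + 1 - 1, h2'⟩ : Fin n) = ⟨j, h3⟩ := by
      apply Fin.ext; simp only [Fin.val_mk]; omega
    rw [ea, eb] at hB
    exact absurd hB (not_lt.mpr (le_of_lt hA))
  constructor
  · refine ⟨PeakAux.eS n S hsub hadj hn, PeakAux.estar n S hsub hadj hn,
      PeakAux.peaks_eS n S hsub hadj hn, PeakAux.peaks_estar n S hsub hadj hn, ?_⟩
    apply le_antisymm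
    · -- n - 1 ≤ dL
      rcases h with h2S | hnS
      · set i₀ : Fin n := ⟨0, by omega⟩ with hi₀
        have v1 : (PeakAux.eS n S hsub hadj hn i₀ : ℕ) = 0 := by
          rw [PeakAux.eS_val]
          have c1 : (i₀ : ℕ) + 1 ∉ S := by
            intro hc; have := hsub _ hc; simp [hi₀] at this
          have c2 : (i₀ : ℕ) ∉ S := by
            intro hc; have := hsub _ hc; simp [hi₀] at this
          rw [if_neg c1, if_neg c2]
        have v2 : (PeakAux.estar n S hsub hadj hn i₀ : ℕ) = n - 1 := by
          rw [PeakAux.estar_val]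
          have c1 : (i₀ : ℕ) + 2 ∉ S := by simpa [hi₀] using h2S
          have c2 : (i₀ : ℕ) + 1 ∉ S := by
            intro hc; have := hsub _ hc; simp [hi₀] at this
          rw [if_neg c1, if_neg c2]
          simp [hi₀]
        refine le_trans ?_ (Finset.le_sup (Finset.mem_univ i₀))
        rw [v1, v2]
        omega
      · set i₀ : Fin n := ⟨n - 1, by omega⟩ with hi₀
        have v1 : (PeakAux.eS n S hsub hadj hn i₀ : ℕ) = n - 1 := by
          rw [PeakAux.eS_val]
          have c1 : (i₀ : ℕ) + 1 ∉ S := by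
            intro hc; have := hsub _ hc; simp [hi₀] at this
          have c2 : (i₀ : ℕ) ∉ S := by simpa [hi₀] using hnS
          rw [if_neg c1, if_neg c2]
        have v2 : (PeakAux.estar n S hsub hadj hn i₀ : ℕ) = 0 := by
          rw [PeakAux.estar_val]
          have c1 : (i₀ : ℕ) + 2 ∉ S := by
            intro hc; have := hsub _ hc; simp [hi₀] at this
          have c2 : (i₀ : ℕ) + 1 ∉ S := by
            intro hc; have := hsub _ hc; simp [hi₀] at this
          rw [if_neg c1, if_neg c2]
          simp [hi₀]
        refine le_trans ?_ (Finset.le_sup (Finset.mem_univ i₀))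
        rw [v1, v2]
        omega
    · exact PeakAux.dL_le n hn _ _
  · rintro d ⟨σ, ρ, -, -, rfl⟩
    exact PeakAux.dL_le n hn σ ρ
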